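/- Suppose P0, P1 : ℕ → ℝ satisfy the steady-state CME of the generalized ON-OFF model with rate functions K1, K2, K3 : ℕ → ℝ, and set P(n) = P0(n) + P1(n). Then for every n ≥ 0, (n+1)·P(n+1) = K3(n)·P1(n). -/
import Mathlib

/-- For solutions of the steady-state CME of the generalized ON-OFF model,
`(n+1)·P(n+1) = K3(n)·P1(n)` for all `n ≥ 0`, where `P = P0 + P1`. -/
theorem cme_flux_relation (K1 K2 K3 P0 P1 P : ℕ → ℝ)
    (hCME0 : ∀ n : ℕ,
      -K1 n * P0 n + K2 n * P1 n + ((n : ℝ) + 1) * P0 (n + 1) - (n : ℝ) * P0 n = 0)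
    (hCME1 : ∀ n : ℕ,
      K1 n * P0 n - K2 n * P1 n + (if n = 0 then 0 else K3 (n - 1) * P1 (n - 1))
        - K3 n * P1 n + ((n : ℝ) + 1) * P1 (n + 1) - (n : ℝ) * P1 n = 0)
    (hP : ∀ n : ℕ, P n = P0 n + P1 n) :
    ∀ n : ℕ, ((n : ℝ) + 1) * P (n + 1) = K3 n * P1 n := by
  intro n
  induction n with
  | zero =>
    have h0 := hCME0 0
    have h1 := hCME1 0
    simp only [if_pos rfl] at h1
    rw [hP 1]
    push_cast at *
    linarith
  | succ m ih =>
    have h0 := hCME0 (m + 1)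
    have h1 := hCME1 (m + 1)
    simp only [Nat.succ_ne_zero, if_neg, Nat.add_sub_cancel] at h1
    rw [hP (m + 2)]
    rw [hP (m + 1)] at ih
    push_cast at *
    linarith
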